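/- For every real t with 0 < t ≤ 1 and every p ∈ (0,1], the following chain of inequalities holds: t^p − t^(p−1) ≤ (1/2)·(t^p − t^(p−1) + t − 1) ≤ (t^p − 1)/p ≤ ((t+1)/2)^(p−1)·(t−1) ≤ t^(p+1) − t^p ≤ 0. -/

import Mathlib

open Real Set

/-- Bernoulli-type inequality for exponents `q ∈ [-1, 0]`. -/
lemma bern_neg {q x : ℝ} (hq0 : -1 ≤ q) (hq1 : q ≤ 0) (hx : 0 < x) :
    1 + q * (x - 1) ≤ x ^ q := by
  rcases le_or_gt (1 + q * (x - 1)) 0 with h | h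
  · exact h.trans (Real.rpow_pos_of_pos hx q).le
  · have hs : (-1 : ℝ) ≤ x - 1 := by linarith
    have hb : x ^ (-q) ≤ 1 + (-q) * (x - 1) := by
      have := rpow_one_add_le_one_add_mul_self hs (p := -q) (by linarith) (by linarith)
      simpa using this
    have hpos : 0 < x ^ (-q) := Real.rpow_pos_of_pos hx _
    have hxq : x ^ q = 1 / x ^ (-q) := by
      rw [eq_div_iff hpos.ne', ← Real.rpow_add hx]
      simp
    rw [hxq, le_div_iff₀ hpos]
    nlinarith [mul_le_mul_of_nonneg_left hb h.le, sq_nonneg (q * (x - 1))]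

/-- Tangent line inequality for the convex function `x ↦ x ^ q`, `q ∈ [-1,0]`. -/
lemma tangent_neg {q X Y : ℝ} (hq0 : -1 ≤ q) (hq1 : q ≤ 0) (hX : 0 < X) (hY : 0 < Y) :
    X ^ q + q * X ^ (q - 1) * (Y - X) ≤ Y ^ q := by
  have h := bern_neg hq0 hq1 (div_pos hY hX)
  rw [Real.div_rpow hY.le hX.le, le_div_iff₀ (Real.rpow_pos_of_pos hX q)] at h
  have hq' : X ^ (q - 1) = X ^ q / X := by
    rw [Real.rpow_sub hX, Real.rpow_one]
  calc X ^ q + q * X ^ (q - 1) * (Y - X)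
      = (1 + q * (Y / X - 1)) * X ^ q := by rw [hq']; field_simp
    _ ≤ Y ^ q := h


lemma hasDeriv3 {p x : ℝ} (hx0 : 0 < x) :
    HasDerivAt (fun y : ℝ => ((y + 1) / 2) ^ (p - 1) * (y - 1) - (y ^ p - 1) / p)
      (1 / 2 * (p - 1) * ((x + 1) / 2) ^ (p - 1 - 1) * (x - 1) + ((x + 1) / 2) ^ (p - 1)
        - p * x ^ (p - 1) / p) x := by
  have hm : 0 < (x + 1) / 2 := by linarith
  have d1 : HasDerivAt (fun y : ℝ => (y + 1) / 2) (1 / 2) x := by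
    simpa using ((hasDerivAt_id x).add_const 1).div_const 2
  have d2 := d1.rpow_const (p := p - 1) (Or.inl hm.ne')
  have d3 := d2.mul ((hasDerivAt_id x).sub_const 1)
  have d4 : HasDerivAt (fun y : ℝ => y ^ p) (p * x ^ (p - 1)) x :=
    Real.hasDerivAt_rpow_const (Or.inl hx0.ne')
  have dF := d3.sub ((d4.sub_const 1).div_const p)
  simp only [id_eq, mul_one] at dF
  exact dF

lemma hasDeriv2 {p x : ℝ} (hx0 : 0 < x) :
    HasDerivAt (fun y : ℝ => (y ^ p - 1) / p - (y ^ (p - 1) + 1) / 2 * (y - 1))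
      (p * x ^ (p - 1) / p
        - ((p - 1) * x ^ (p - 1 - 1) / 2 * (x - 1) + (x ^ (p - 1) + 1) / 2)) x := by
  have d4 : HasDerivAt (fun y : ℝ => y ^ p) (p * x ^ (p - 1)) x :=
    Real.hasDerivAt_rpow_const (Or.inl hx0.ne')
  have d6 : HasDerivAt (fun y : ℝ => y ^ (p - 1)) ((p - 1) * x ^ (p - 1 - 1)) x :=
    Real.hasDerivAt_rpow_const (Or.inl hx0.ne')
  have d7 := ((d6.add_const 1).div_const 2).mul ((hasDerivAt_id x).sub_const 1)
  have dF := ((d4.sub_const 1).div_const p).sub d7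
  simp only [id_eq, mul_one] at dF
  exact dF

lemma key3 (t p : ℝ) (ht0 : 0 < t) (ht1 : t ≤ 1) (hp0 : 0 < p) (hp1 : p ≤ 1) :
    (t ^ p - 1) / p ≤ ((t + 1) / 2) ^ (p - 1) * (t - 1) := by
  set f : ℝ → ℝ := fun x => ((x + 1) / 2) ^ (p - 1) * (x - 1) - (x ^ p - 1) / p with hf
  have hf1 : f 1 = 0 := by simp [hf, Real.one_rpow]
  have hanti : AntitoneOn f (Icc t 1) := by
    apply antitoneOn_of_deriv_nonpos (convex_Icc t 1)
    · apply ContinuousOn.sub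
      · apply ContinuousOn.mul
        · apply ContinuousOn.rpow_const
          · exact ((continuousOn_id.add continuousOn_const).div_const 2)
          · intro x hx
            have : 0 < x := lt_of_lt_of_le ht0 hx.1
            exact Or.inl (by positivity)
        · exact continuousOn_id.sub continuousOn_const
      · apply ContinuousOn.div_const
        apply ContinuousOn.sub _ continuousOn_const
        apply ContinuousOn.rpow_const continuousOn_id
        intro x hx
        exact Or.inl (lt_of_lt_of_le ht0 hx.1).ne'
    · intro x hx
      rw [interior_Icc] at hx
      have hx0 : 0 < x := ht0.trans hx.1
      exact (hasDeriv3 (p := p) hx0).differentiableAt.differentiableWithinAt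
    · intro x hx
      rw [interior_Icc] at hx
      have hx0 : 0 < x := ht0.trans hx.1
      have hm : 0 < (x + 1) / 2 := by linarith
      rw [hf, (hasDeriv3 (p := p) hx0).deriv]
      have hx' : p * x ^ (p - 1) / p = x ^ (p - 1) := by field_simp
      have tang := tangent_neg (q := p - 1) (by linarith) (by linarith) hm hx0
      have e : 1 / 2 * (p - 1) * ((x + 1) / 2) ^ (p - 1 - 1) * (x - 1)
          = (p - 1) * ((x + 1) / 2) ^ (p - 1 - 1) * (x - (x + 1) / 2) := by ring
      rw [hx']
      linarith [tang, e]
  have h := hanti (left_mem_Icc.mpr ht1) (right_mem_Icc.mpr ht1) ht1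
  rw [hf1] at h
  simp only [hf] at h
  linarith

lemma key2 (t p : ℝ) (ht0 : 0 < t) (ht1 : t ≤ 1) (hp0 : 0 < p) (hp1 : p ≤ 1) :
    ((t ^ (p - 1) + 1) / 2) * (t - 1) ≤ (t ^ p - 1) / p := by
  set f : ℝ → ℝ := fun x => (x ^ p - 1) / p - ((x ^ (p - 1) + 1) / 2) * (x - 1) with hf
  have hf1 : f 1 = 0 := by simp [hf, Real.one_rpow]
  have hanti : AntitoneOn f (Icc t 1) := by
    apply antitoneOn_of_deriv_nonpos (convex_Icc t 1)
    · apply ContinuousOn.sub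
      · apply ContinuousOn.div_const
        apply ContinuousOn.sub _ continuousOn_const
        apply ContinuousOn.rpow_const continuousOn_id
        intro x hx
        exact Or.inl (lt_of_lt_of_le ht0 hx.1).ne'
      · apply ContinuousOn.mul
        · apply ContinuousOn.div_const
          apply ContinuousOn.add _ continuousOn_const
          apply ContinuousOn.rpow_const continuousOn_id
          intro x hx
          exact Or.inl (lt_of_lt_of_le ht0 hx.1).ne'
        · exact continuousOn_id.sub continuousOn_const
    · intro x hx
      rw [interior_Icc] at hx
      have hx0 : 0 < x := ht0.trans hx.1
      exact (hasDeriv2 (p := p) hx0).differentiableAt.differentiableWithinAt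
    · intro x hx
      rw [interior_Icc] at hx
      have hx0 : 0 < x := ht0.trans hx.1
      rw [hf, (hasDeriv2 (p := p) hx0).deriv]
      have hx' : p * x ^ (p - 1) / p = x ^ (p - 1) := by field_simp
      have tang := tangent_neg (q := p - 1) (by linarith) (by linarith) hx0 one_pos
      rw [Real.one_rpow] at tang
      rw [hx']
      nlinarith [tang]
  have h := hanti (left_mem_Icc.mpr ht1) (right_mem_Icc.mpr ht1) ht1
  rw [hf1] at h
  simp only [hf] at h
  linarith

theorem stmt4 (t p : ℝ) (ht0 : 0 < t) (ht1 : t ≤ 1) (hp0 : 0 < p) (hp1 : p ≤ 1) :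
    t ^ p - t ^ (p - 1) ≤ (1 / 2) * (t ^ p - t ^ (p - 1) + t - 1) ∧
    (1 / 2) * (t ^ p - t ^ (p - 1) + t - 1) ≤ (t ^ p - 1) / p ∧
    (t ^ p - 1) / p ≤ ((t + 1) / 2) ^ (p - 1) * (t - 1) ∧
    ((t + 1) / 2) ^ (p - 1) * (t - 1) ≤ t ^ (p + 1) - t ^ p ∧
    t ^ (p + 1) - t ^ p ≤ 0 := by
  have hpow : t ^ p = t ^ (p - 1) * t := by
    have h := Real.rpow_add_one ht0.ne' (p - 1)
    rw [sub_add_cancel] at h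
    exact h
  have hpow1 : t ^ (p + 1) = t ^ p * t := Real.rpow_add_one ht0.ne' p
  have h1ge : 1 ≤ t ^ (p - 1) :=
    Real.one_le_rpow_of_pos_of_le_one_of_nonpos ht0 ht1 (by linarith)
  have hle1 : t ^ p ≤ 1 := Real.rpow_le_one ht0.le ht1 hp0.le
  have htp0 : 0 ≤ t ^ p := (Real.rpow_pos_of_pos ht0 p).le
  have hm1 : 1 ≤ ((t + 1) / 2) ^ (p - 1) :=
    Real.one_le_rpow_of_pos_of_le_one_of_nonpos (by linarith) (by linarith) (by linarith)
  have h5 : t ^ (p + 1) ≤ t ^ p :=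
    Real.rpow_le_rpow_of_exponent_ge ht0 ht1 (by linarith)
  refine ⟨?_, ?_, key3 t p ht0 ht1 hp0 hp1, ?_, by linarith⟩
  · nlinarith [mul_nonneg (by linarith : (0:ℝ) ≤ t ^ (p - 1) - 1) (by linarith : (0:ℝ) ≤ 1 - t)]
  · have h2 := key2 t p ht0 ht1 hp0 hp1
    linarith
  · nlinarith [mul_nonneg (by linarith : (0:ℝ) ≤ ((t + 1) / 2) ^ (p - 1) - 1)
      (by linarith : (0:ℝ) ≤ 1 - t),
      mul_nonneg (by linarith : (0:ℝ) ≤ 1 - t ^ p) (by linarith : (0:ℝ) ≤ 1 - t)]
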